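/- The cone of possible velocities at a positive distribution P for all Markov chains with positive equilibrium P* equals Q(P,P*) = cone{ γ^{ji} · sign(p_j/p*_j − p_i/p*_i) : i > j }, where γ^{ji} = e_i − e_j; in particular, this cone is a polyhedral convex cone. -/

import Mathlib

open Finset

/-- Component formula for the generator sums appearing in the cone `Q`. -/
lemma compQ {n : ℕ} (c : Fin n → Fin n → ℝ) (l : Fin n) :
    (∑ i, ∑ j ∈ Finset.univ.filter (fun j => j < i),
        c i j • (fun l => (if l = i then (1 : ℝ) else 0) - if l = j then 1 else 0)) l
      = (∑ j ∈ Finset.univ.filter (fun j => j < l), c l j)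
        - ∑ i ∈ Finset.univ.filter (fun i => l < i), c i l := by
  have h1 : ∀ i : Fin n, (∑ j ∈ Finset.univ.filter (fun j => j < i),
      c i j • (fun l => (if l = i then (1 : ℝ) else 0) - if l = j then 1 else 0)) l
      = ∑ j ∈ Finset.univ.filter (fun j => j < i),
          ((if l = i then c i j else 0) - (if l = j then c i j else 0)) := by
    intro i
    rw [Finset.sum_apply]
    refine Finset.sum_congr rfl fun j _ => ?_
    simp only [Pi.smul_apply, smul_eq_mul]
    split_ifs <;> ring
  simp only [Finset.sum_apply]
  rw [show (∑ i, ∑ j ∈ Finset.univ.filter (fun j => j < i),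
      (c i j • (fun l => (if l = i then (1 : ℝ) else 0) - if l = j then 1 else 0)) l) =
      ∑ i, ∑ j ∈ Finset.univ.filter (fun j => j < i),
        ((if l = i then c i j else 0) - (if l = j then c i j else 0)) from
    Finset.sum_congr rfl fun i _ => by rw [← h1 i, Finset.sum_apply]]
  rw [Finset.sum_congr rfl (fun i _ => Finset.sum_sub_distrib _ _), Finset.sum_sub_distrib]
  congr 1
  · have : ∀ i : Fin n, (∑ j ∈ Finset.univ.filter (fun j => j < i),
        (if l = i then c i j else 0))
        = if l = i then ∑ j ∈ Finset.univ.filter (fun j => j < i), c i j else 0 := by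
      intro i; split_ifs <;> simp
    rw [Finset.sum_congr rfl fun i _ => this i, Finset.sum_ite_eq]
    simp
  · have : ∀ i : Fin n, (∑ j ∈ Finset.univ.filter (fun j => j < i),
        (if l = j then c i j else 0)) = if l < i then c i l else 0 := by
      intro i
      rw [Finset.sum_ite_eq]
      simp
    rw [Finset.sum_congr rfl fun i _ => this i, ← Finset.sum_filter]

/-- Splitting a sum over all indices into the parts below and above `l`,
provided the term at `l` vanishes. -/
lemma splitlt {n : ℕ} (l : Fin n) (d : Fin n → ℝ) (hd : d l = 0) :
    ∑ b, d b = (∑ b ∈ Finset.univ.filter (fun b => b < l), d b)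
      + ∑ b ∈ Finset.univ.filter (fun b => l < b), d b := by
  rw [← Finset.sum_filter_add_sum_filter_not Finset.univ (fun b => b < l)]
  congr 1
  have h : Finset.univ.filter (fun b : Fin n => ¬ b < l)
      = insert l (Finset.univ.filter (fun b => l < b)) := by
    ext b
    simp only [Finset.mem_filter, Finset.mem_univ, true_and, Finset.mem_insert, not_lt]
    constructor
    · intro h; rcases eq_or_lt_of_le h with h | h
      · exact Or.inl h.symm
      · exact Or.inr h
    · rintro (rfl | h)
      · exact le_refl _
      · exact le_of_lt h
  rw [h, Finset.sum_insert (by simp), hd, zero_add]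

lemma signdiv (x : ℝ) (hx : x ≠ 0) : x / |x| = Real.sign x := by
  rcases lt_or_gt_of_ne hx with h | h
  · rw [Real.sign_of_neg h, abs_of_neg h, div_neg, div_self hx]
  · rw [Real.sign_of_pos h, abs_of_pos h, div_self hx]

/-- Transport lemma: a vector summing to zero is a difference of marginals of
a nonnegative "transport plan" supported on (positive, negative) pairs. -/
lemma transport {n : ℕ} (u : Fin n → ℝ) (hu : ∑ i, u i = 0) :
    ∃ γ : Fin n → Fin n → ℝ, (∀ a b, 0 ≤ γ a b) ∧
      (∀ a b, γ a b ≠ 0 → 0 < u a ∧ u b < 0) ∧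
      (∀ i, u i = (∑ b, γ i b) - (∑ a, γ a i)) := by
  set P : Fin n → ℝ := fun i => max (u i) 0 with hP
  set N : Fin n → ℝ := fun i => max (-u i) 0 with hN
  have hPN : ∀ i, u i = P i - N i := fun i => (max_zero_sub_max_neg_zero_eq_self (u i)).symm
  have hP0 : ∀ i, 0 ≤ P i := fun i => le_max_right _ _
  have hN0 : ∀ i, 0 ≤ N i := fun i => le_max_right _ _
  have hsum : ∑ i, P i = ∑ i, N i := by
    have := Finset.sum_congr rfl (fun i (_ : i ∈ Finset.univ) => hPN i)
    rw [Finset.sum_sub_distrib] at this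
    linarith [hu ▸ this]
  set C : ℝ := ∑ i, P i with hC
  refine ⟨fun a b => P a * N b / C, fun a b => by positivity, ?_, ?_⟩
  · intro a b h
    constructor
    · rcases lt_or_ge 0 (u a) with h' | h'
      · exact h'
      · exfalso; apply h; have : P a = 0 := by simp [hP, h']
        simp [this]
    · rcases lt_or_ge (u b) 0 with h' | h'
      · exact h'
      · exfalso; apply h; have : N b = 0 := by simp [hN]; linarith
        simp [this]
  · intro i
    by_cases hC0 : C = 0
    · have hPz : ∀ j, P j = 0 := by
        intro j
        have h2 : ∑ i, P i = 0 := by rw [← hC]; exact hC0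
        exact (Finset.sum_eq_zero_iff_of_nonneg (fun j _ => hP0 j)).mp h2 j (Finset.mem_univ j)
      have hNz : ∀ j, N j = 0 := by
        intro j
        have h2 : ∑ i, N i = 0 := by rw [← hsum]; exact hC0
        exact (Finset.sum_eq_zero_iff_of_nonneg (fun j _ => hN0 j)).mp h2 j (Finset.mem_univ j)
      have : u i = 0 := by rw [hPN i, hPz i, hNz i]; ring
      simp [this, hPz, hNz, hC0]
    · have h1 : (∑ b, P i * N b / C) = P i := by
        rw [← Finset.sum_div, ← Finset.mul_sum, ← hsum, mul_div_assoc,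
          div_self hC0, mul_one]
      have h2 : (∑ a, P a * N i / C) = N i := by
        rw [← Finset.sum_div, ← Finset.sum_mul, mul_comm, mul_div_assoc,
          div_self hC0, mul_one]
      rw [h1, h2, hPN i]

/-- Main lemma: the velocity of any circulation `F` against potential `g` is a
nonnegative combination of the elementary vectors `e_a - e_b` with `g a < g b`. -/
lemma lemA {n : ℕ} : ∀ (k : ℕ) (g : Fin n → ℝ),
    (Finset.image g Finset.univ).card ≤ k →
    ∀ (F : Fin n → Fin n → ℝ), (∀ a b, 0 ≤ F a b) → (∀ i, (∑ j, F j i) = ∑ j, F i j) →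
    ∃ γ : Fin n → Fin n → ℝ, (∀ a b, 0 ≤ γ a b) ∧ (∀ a b, ¬ g a < g b → γ a b = 0) ∧
      (∀ i, (∑ j, F j i * (g j - g i)) = (∑ b, γ i b) - (∑ a, γ a i)) := by
  intro k
  induction k with
  | zero =>
    intro g hcard F hF hbal
    refine ⟨0, fun a b => le_refl 0, fun a b _ => rfl, fun i => ?_⟩
    exact absurd (Finset.mem_image_of_mem g (Finset.mem_univ i))
      (by simp [Finset.card_eq_zero.mp (Nat.le_zero.mp hcard)])
  | succ k ih =>
    intro g hcard F hF hbal
    by_cases hone : (Finset.image g Finset.univ).card ≤ 1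
    · -- g is constant
      have hconst : ∀ i j : Fin n, g i = g j := by
        intro i j
        exact Finset.card_le_one.mp hone _ (Finset.mem_image_of_mem g (Finset.mem_univ i))
          _ (Finset.mem_image_of_mem g (Finset.mem_univ j))
      refine ⟨0, fun a b => le_refl 0, fun a b _ => rfl, fun i => ?_⟩
      simp [hconst _ i]
    · push_neg at hone
      have hne : (Finset.image g Finset.univ).Nonempty :=
        Finset.card_pos.mp (by omega)
      set M : ℝ := (Finset.image g Finset.univ).max' hne with hM
      have hMmem : M ∈ Finset.image g Finset.univ := Finset.max'_mem _ _
      have hMmax : ∀ i, g i ≤ M := fun i =>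
        Finset.le_max' _ _ (Finset.mem_image_of_mem g (Finset.mem_univ i))
      set T : Finset ℝ := (Finset.image g Finset.univ).erase M with hT
      have hTne : T.Nonempty := by
        rw [← Finset.card_pos, hT, Finset.card_erase_of_mem hMmem]; omega
      set M' : ℝ := T.max' hTne with hM'
      have hM'mem : M' ∈ T := Finset.max'_mem _ _
      have hM'lt : M' < M := by
        rcases Finset.mem_erase.mp hM'mem with ⟨hne', hmem⟩
        exact lt_of_le_of_ne (Finset.le_max' _ _ hmem) hne'
      have hM'max : ∀ i, g i ≠ M → g i ≤ M' := fun i hi =>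
        Finset.le_max' _ _ (Finset.mem_erase.mpr ⟨hi, Finset.mem_image_of_mem g (Finset.mem_univ i)⟩)
      set g' : Fin n → ℝ := fun i => if g i = M then M' else g i with hg'
      set χ : Fin n → ℝ := fun i => if g i = M then 1 else 0 with hχ
      have hkey : ∀ x, g x = g' x + (M - M') * χ x := by
        intro x; simp only [hg', hχ]; split_ifs with h <;> simp [h]
      have hg'card : (Finset.image g' Finset.univ).card ≤ k := by
        have hsub : Finset.image g' Finset.univ ⊆ T := by
          intro x hx
          rcases Finset.mem_image.mp hx with ⟨i, _, rfl⟩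
          simp only [hg']
          split_ifs with h
          · exact hM'mem
          · exact Finset.mem_erase.mpr ⟨h, Finset.mem_image_of_mem g (Finset.mem_univ i)⟩
        calc (Finset.image g' Finset.univ).card ≤ T.card := Finset.card_le_card hsub
          _ = (Finset.image g Finset.univ).card - 1 := by
              rw [hT, Finset.card_erase_of_mem hMmem]
          _ ≤ k := by omega
      have hmono : ∀ a b, g' a < g' b → g a < g b := by
        intro a b hab
        have hb' : ∀ x, g' x ≤ M' := by
          intro x; simp only [hg']; split_ifs with h
          · exact le_refl _
          · exact hM'max x h
        by_cases ha : g a = M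
        · exfalso; have : g' a = M' := by simp [hg', ha]
          exact absurd (lt_of_lt_of_le (this ▸ hab) (hb' b)) (lt_irrefl _)
        · have hga : g' a = g a := by simp [hg', ha]
          by_cases hb : g b = M
          · rw [hb]; exact lt_of_le_of_ne (hMmax a) ha
          · have : g' b = g b := by simp [hg', hb]
            rw [← hga, ← this]; exact hab
      obtain ⟨γ', hγ'0, hγ's, hγ'f⟩ := ih g' hg'card F hF hbal
      set u : Fin n → ℝ := fun i => ∑ j, F j i * (χ j - χ i) with hu
      have husum : ∑ i, u i = 0 := by
        simp only [hu]
        have : ∀ i : Fin n, (∑ j, F j i * (χ j - χ i))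
            = (∑ j, F j i * χ j) - χ i * ∑ j, F j i := by
          intro i
          rw [Finset.mul_sum, ← Finset.sum_sub_distrib]
          exact Finset.sum_congr rfl fun j _ => by ring
        rw [Finset.sum_congr rfl fun i _ => this i, Finset.sum_sub_distrib]
        rw [Finset.sum_comm]
        have h1 : ∀ j : Fin n, (∑ i, F j i * χ j) = χ j * ∑ i, F i j := by
          intro j
          rw [← Finset.sum_mul, ← hbal j]; ring
        rw [Finset.sum_congr rfl fun j _ => h1 j]
        rw [Finset.sum_congr rfl fun i (_ : i ∈ Finset.univ) =>
          (by rw [hbal i] : χ i * (∑ j, F j i) = χ i * ∑ j, F i j)]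
        ring
      obtain ⟨γu, hγu0, hγus, hγuf⟩ := transport u husum
      have hua : ∀ a, 0 < u a → g a ≠ M := by
        intro a hpos ha
        have hle : u a ≤ 0 := by
          simp only [hu]
          apply Finset.sum_nonpos
          intro j _
          refine mul_nonpos_iff.mpr (Or.inl ⟨hF j a, ?_⟩)
          have h1 : χ a = 1 := by simp [hχ, ha]
          have h2 : χ j ≤ 1 := by simp only [hχ]; split_ifs <;> norm_num
          linarith
        linarith
      have hub : ∀ b, u b < 0 → g b = M := by
        intro b hneg
        by_contra hb
        have hge : 0 ≤ u b := by
          simp only [hu]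
          apply Finset.sum_nonneg
          intro j _
          have h1 : χ b = 0 := by simp [hχ, hb]
          have h2 : 0 ≤ χ j := by simp only [hχ]; split_ifs <;> norm_num
          have := hF j b
          nlinarith
        linarith
      refine ⟨fun a b => γ' a b + (M - M') * γu a b,
        fun a b => add_nonneg (hγ'0 a b) (mul_nonneg (by linarith) (hγu0 a b)), ?_, ?_⟩
      · intro a b h
        have h1 : γ' a b = 0 := hγ's a b (fun h' => h (hmono a b h'))
        have h2 : γu a b = 0 := by
          by_contra h2
          obtain ⟨hua', hub'⟩ := hγus a b h2
          have hgb : g b = M := hub b hub'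
          have hga : g a ≠ M := hua a hua'
          exact h (hgb ▸ lt_of_le_of_ne (hMmax a) hga)
        show γ' a b + (M - M') * γu a b = 0
        rw [h1, h2]; ring
      · intro i
        show _ = (∑ b, (γ' i b + (M - M') * γu i b)) - (∑ a, (γ' a i + (M - M') * γu a i))
        have step : ∀ j, F j i * (g j - g i)
            = F j i * (g' j - g' i) + (M - M') * (F j i * (χ j - χ i)) := by
          intro j; rw [hkey j, hkey i]; ring
        rw [Finset.sum_congr rfl fun j _ => step j, Finset.sum_add_distrib, ← Finset.mul_sum]
        have hui : (∑ j, F j i * (χ j - χ i)) = u i := rfl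
        rw [hui, hγ'f i, hγuf i]
        rw [Finset.sum_add_distrib, Finset.sum_add_distrib, ← Finset.mul_sum, ← Finset.mul_sum]
        ring

lemma dir1 {n : ℕ} (ps p : Fin n → ℝ) (hps : ∀ i, 0 < ps i)
    (q : Fin n → Fin n → ℝ) (hq0 : ∀ i j, i ≠ j → 0 ≤ q i j) (hqd : ∀ i, q i i = 0)
    (hqb : ∀ i, ∑ j ∈ Finset.univ.erase i, q i j * ps j
      = (∑ j ∈ Finset.univ.erase i, q j i) * ps i) :
    ∃ w : Fin n → Fin n → ℝ, (∀ i j, 0 ≤ w i j) ∧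
      (fun i => ∑ j ∈ Finset.univ.erase i, q i j * ps j * (p j / ps j - p i / ps i))
      = ∑ i, ∑ j ∈ Finset.univ.filter (fun j => j < i),
          (w i j * Real.sign (p j / ps j - p i / ps i)) •
            (fun l => (if l = i then (1 : ℝ) else 0) - if l = j then 1 else 0) := by
  set g : Fin n → ℝ := fun i => p i / ps i with hg
  set F : Fin n → Fin n → ℝ := fun a b => q b a * ps a with hFdef
  have hFii : ∀ i, F i i = 0 := fun i => by simp [hFdef, hqd]
  have hF0 : ∀ a b, 0 ≤ F a b := by
    intro a b
    by_cases h : b = a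
    · simp [hFdef, h, hqd]
    · exact mul_nonneg (hq0 b a h) (le_of_lt (hps a))
  have hbal : ∀ i, (∑ j, F j i) = ∑ j, F i j := by
    intro i
    have e1 : (∑ j, F j i) = ∑ j ∈ Finset.univ.erase i, q i j * ps j := by
      rw [← Finset.sum_erase (f := fun j => F j i) Finset.univ (hFii i)]
    have e2 : (∑ j, F i j) = ∑ j ∈ Finset.univ.erase i, q j i * ps i := by
      rw [← Finset.sum_erase (f := fun j => F i j) Finset.univ (hFii i)]
    rw [e1, e2, hqb i, Finset.sum_mul]
  obtain ⟨γ, hγ0, hγs, hγf⟩ :=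
    lemA (Finset.image g Finset.univ).card g (le_refl _) F hF0 hbal
  refine ⟨fun i j => if g j < g i then γ j i else γ i j, ?_, ?_⟩
  · intro i j; dsimp only; split_ifs; exacts [hγ0 j i, hγ0 i j]
  · funext l
    have key : ∀ i j : Fin n, (if g j < g i then γ j i else γ i j) * Real.sign (g j - g i)
        = γ i j - γ j i := by
      intro i j
      rcases lt_trichotomy (g j) (g i) with h | h | h
      · rw [if_pos h, Real.sign_of_neg (by linarith : g j - g i < 0),
          hγs i j (not_lt.mpr (le_of_lt h))]; ring
      · rw [if_neg (by rw [h]; exact lt_irrefl _), h, sub_self, Real.sign_zero,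
          hγs i j (not_lt.mpr (le_of_eq h)), hγs j i (not_lt.mpr (le_of_eq h.symm))]
        ring
      · rw [if_neg (not_lt.mpr (le_of_lt h)), Real.sign_of_pos (by linarith : 0 < g j - g i),
          hγs j i (not_lt.mpr (le_of_lt h))]; ring
    have hL : (∑ j ∈ Finset.univ.erase l, q l j * ps j * (p j / ps j - p l / ps l))
        = (∑ b, γ l b) - ∑ a, γ a l := by
      have e : (∑ j ∈ Finset.univ.erase l, q l j * ps j * (p j / ps j - p l / ps l))
          = ∑ j, F j l * (g j - g l) := by
        rw [← Finset.sum_erase (f := fun j => F j l * (g j - g l)) Finset.univ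
          (show F l l * (g l - g l) = 0 by rw [sub_self, mul_zero])]
      rw [e, hγf l]
    calc (fun i => ∑ j ∈ Finset.univ.erase i, q i j * ps j * (p j / ps j - p i / ps i)) l
        = (∑ b, γ l b) - ∑ a, γ a l := hL
      _ = ∑ b, (γ l b - γ b l) := by rw [Finset.sum_sub_distrib]
      _ = (∑ b ∈ Finset.univ.filter (fun b => b < l), (γ l b - γ b l))
          + ∑ b ∈ Finset.univ.filter (fun b => l < b), (γ l b - γ b l) :=
        splitlt l (fun b => γ l b - γ b l) (sub_self _)
      _ = (∑ j ∈ Finset.univ.filter (fun j => j < l),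
            (if g j < g l then γ j l else γ l j) * Real.sign (g j - g l))
          - ∑ i ∈ Finset.univ.filter (fun i => l < i),
            (if g l < g i then γ l i else γ i l) * Real.sign (g l - g i) := by
        rw [sub_eq_add_neg, ← Finset.sum_neg_distrib]
        congr 1
        · exact Finset.sum_congr rfl fun j _ => (key l j).symm
        · exact Finset.sum_congr rfl fun i _ => by rw [key i l]; ring
      _ = (∑ i, ∑ j ∈ Finset.univ.filter (fun j => j < i),
          ((fun i j => if g j < g i then γ j i else γ i j) i j
            * Real.sign (p j / ps j - p i / ps i)) •
            (fun l => (if l = i then (1 : ℝ) else 0) - if l = j then 1 else 0)) l :=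
        (compQ (fun i j => (if g j < g i then γ j i else γ i j)
          * Real.sign (p j / ps j - p i / ps i)) l).symm

lemma dir2 {n : ℕ} (ps p : Fin n → ℝ) (hps : ∀ i, 0 < ps i)
    (w : Fin n → Fin n → ℝ) (hw : ∀ i j, 0 ≤ w i j) :
    ∃ q : Fin n → Fin n → ℝ,
      (∀ i j, i ≠ j → 0 ≤ q i j) ∧ (∀ i, q i i = 0) ∧
      (∀ i, ∑ j ∈ Finset.univ.erase i, q i j * ps j
        = (∑ j ∈ Finset.univ.erase i, q j i) * ps i) ∧
      (∑ i, ∑ j ∈ Finset.univ.filter (fun j => j < i),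
          (w i j * Real.sign (p j / ps j - p i / ps i)) •
            (fun l => (if l = i then (1 : ℝ) else 0) - if l = j then 1 else 0))
      = fun i => ∑ j ∈ Finset.univ.erase i,
          q i j * ps j * (p j / ps j - p i / ps i) := by
  set g : Fin n → ℝ := fun i => p i / ps i with hg
  set W : Fin n → Fin n → ℝ := fun a b => if b < a then w a b else w b a with hW
  have hW0 : ∀ a b, 0 ≤ W a b := by
    intro a b; simp only [hW]; split_ifs; exacts [hw a b, hw b a]
  have hWsymm : ∀ a b, W a b = W b a := by
    intro a b
    rcases lt_trichotomy a b with h | h | h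
    · simp only [hW]
      rw [if_neg (asymm h), if_pos h]
    · rw [h]
    · simp only [hW]
      rw [if_pos h, if_neg (asymm h)]
  refine ⟨fun a b => if g a = g b then 0 else W a b / (|g b - g a| * ps b), ?_, ?_, ?_, ?_⟩
  · intro i j _
    dsimp only
    split_ifs with h
    · exact le_refl 0
    · exact div_nonneg (hW0 i j) (mul_nonneg (abs_nonneg _) (le_of_lt (hps j)))
  · intro i; simp
  · intro i
    rw [Finset.sum_mul]
    refine Finset.sum_congr rfl fun j hj => ?_
    dsimp only
    rcases eq_or_ne (g i) (g j) with h | h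
    · rw [if_pos h, if_pos h.symm, zero_mul, zero_mul]
    · rw [if_neg h, if_neg h.symm]
      rw [div_mul_eq_mul_div, mul_div_mul_right _ _ (ne_of_gt (hps j)),
        div_mul_eq_mul_div, mul_div_mul_right _ _ (ne_of_gt (hps i)),
        hWsymm i j, abs_sub_comm]
  · funext l
    have hterm : ∀ j, j ≠ l →
        (if g l = g j then 0 else W l j / (|g j - g l| * ps j)) * ps j * (g j - g l)
          = W l j * Real.sign (g j - g l) := by
      intro j _
      rcases eq_or_ne (g l) (g j) with h | h
      · rw [if_pos h, zero_mul, zero_mul, h, sub_self, Real.sign_zero, mul_zero]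
      · have hx : g j - g l ≠ 0 := sub_ne_zero.mpr (Ne.symm h)
        rw [if_neg h, div_mul_eq_mul_div, mul_div_mul_right _ _ (ne_of_gt (hps j)),
          div_mul_eq_mul_div, mul_div_assoc, signdiv _ hx]
    have hR : (∑ j ∈ Finset.univ.erase l,
        (if g l = g j then 0 else W l j / (|g j - g l| * ps j)) * ps j * (g j - g l))
        = ∑ b, W l b * Real.sign (g b - g l) := by
      rw [Finset.sum_congr rfl fun j hj => hterm j (Finset.ne_of_mem_erase hj)]
      exact Finset.sum_erase Finset.univ
        (by show W l l * Real.sign (g l - g l) = 0; rw [sub_self, Real.sign_zero, mul_zero])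
    rw [compQ (fun i j => w i j * Real.sign (p j / ps j - p i / ps i)) l]
    show _ = ∑ j ∈ Finset.univ.erase l,
        (if g l = g j then 0 else W l j / (|g j - g l| * ps j)) * ps j * (g j - g l)
    rw [hR, splitlt l (fun b => W l b * Real.sign (g b - g l))
      (by show W l l * Real.sign (g l - g l) = 0; rw [sub_self, Real.sign_zero, mul_zero])]
    rw [sub_eq_add_neg, ← Finset.sum_neg_distrib]
    congr 1
    · refine Finset.sum_congr rfl fun j hj => ?_
      have hjl : j < l := (Finset.mem_filter.mp hj).2
      show w l j * Real.sign (g j - g l) = W l j * Real.sign (g j - g l)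
      rw [hW]; dsimp only; rw [if_pos hjl]
    · refine Finset.sum_congr rfl fun i hi => ?_
      have hli : l < i := (Finset.mem_filter.mp hi).2
      show -(w i l * Real.sign (g l - g i)) = W l i * Real.sign (g i - g l)
      rw [hW]; dsimp only; rw [if_neg (asymm hli)]
      rw [show g l - g i = -(g i - g l) by ring, Real.sign_neg]
      ring

/-- The cone of possible velocities at a positive
distribution `P` over all Markov chains with positive equilibrium `P*` equals
`cone{ (e_i − e_j)·sign(p_j/p*_j − p_i/p*_i) : i > j }`; in particular it is a
convex cone (polyhedral, being finitely generated). -/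
theorem velocity_cone_description
    (n : ℕ) (ps p : Fin n → ℝ)
    (hps : ∀ i, 0 < ps i) (hp : ∀ i, 0 < p i) (hp1 : ∑ i, p i = 1) :
    let V : Set (Fin n → ℝ) :=
      {v | ∃ q : Fin n → Fin n → ℝ,
        (∀ i j, i ≠ j → 0 ≤ q i j) ∧ (∀ i, q i i = 0) ∧
        (∀ i, ∑ j ∈ Finset.univ.erase i, q i j * ps j
          = (∑ j ∈ Finset.univ.erase i, q j i) * ps i) ∧
        v = fun i => ∑ j ∈ Finset.univ.erase i,
          q i j * ps j * (p j / ps j - p i / ps i)}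
    let Q : Set (Fin n → ℝ) :=
      {v | ∃ w : Fin n → Fin n → ℝ, (∀ i j, 0 ≤ w i j) ∧
        v = ∑ i, ∑ j ∈ Finset.univ.filter (fun j => j < i),
          (w i j * Real.sign (p j / ps j - p i / ps i)) •
            (fun l => (if l = i then (1 : ℝ) else 0) - if l = j then 1 else 0)}
    V = Q ∧ Convex ℝ V ∧ ∀ c : ℝ, 0 ≤ c → ∀ v ∈ V, c • v ∈ V := by
  intro V Q
  refine ⟨?_, ?_, ?_⟩
  · apply Set.eq_of_subset_of_subset
    · rintro v ⟨q, hq0, hqd, hqb, hqv⟩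
      obtain ⟨w, hw0, heq⟩ := dir1 ps p hps q hq0 hqd hqb
      exact ⟨w, hw0, hqv.trans heq⟩
    · rintro v ⟨w, hw0, hv⟩
      obtain ⟨q, h1, h2, h3, h4⟩ := dir2 ps p hps w hw0
      exact ⟨q, h1, h2, h3, hv.trans h4⟩
  · rintro x ⟨qx, hx0, hxd, hxb, hxv⟩ y ⟨qy, hy0, hyd, hyb, hyv⟩ a b ha hb hab
    refine ⟨fun i j => a * qx i j + b * qy i j, ?_, ?_, ?_, ?_⟩
    · intro i j hij
      exact add_nonneg (mul_nonneg ha (hx0 i j hij)) (mul_nonneg hb (hy0 i j hij))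
    · intro i; show a * qx i i + b * qy i i = 0; rw [hxd i, hyd i]; ring
    · intro i
      show ∑ j ∈ Finset.univ.erase i, (a * qx i j + b * qy i j) * ps j
        = (∑ j ∈ Finset.univ.erase i, (a * qx j i + b * qy j i)) * ps i
      have e1 : ∑ j ∈ Finset.univ.erase i, (a * qx i j + b * qy i j) * ps j
          = a * (∑ j ∈ Finset.univ.erase i, qx i j * ps j)
            + b * (∑ j ∈ Finset.univ.erase i, qy i j * ps j) := by
        rw [Finset.mul_sum, Finset.mul_sum, ← Finset.sum_add_distrib]
        exact Finset.sum_congr rfl fun j _ => by ring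
      have e2 : ∑ j ∈ Finset.univ.erase i, (a * qx j i + b * qy j i)
          = a * (∑ j ∈ Finset.univ.erase i, qx j i)
            + b * (∑ j ∈ Finset.univ.erase i, qy j i) := by
        rw [Finset.mul_sum, Finset.mul_sum, ← Finset.sum_add_distrib]
      rw [e1, e2, hxb i, hyb i]; ring
    · funext i
      show (a • x + b • y) i = ∑ j ∈ Finset.univ.erase i,
        (a * qx i j + b * qy i j) * ps j * (p j / ps j - p i / ps i)
      calc (a • x + b • y) i = a * x i + b * y i := rfl
        _ = a * (∑ j ∈ Finset.univ.erase i, qx i j * ps j * (p j / ps j - p i / ps i))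
            + b * (∑ j ∈ Finset.univ.erase i, qy i j * ps j * (p j / ps j - p i / ps i)) := by
          rw [congrFun hxv i, congrFun hyv i]
        _ = ∑ j ∈ Finset.univ.erase i,
            (a * qx i j + b * qy i j) * ps j * (p j / ps j - p i / ps i) := by
          rw [Finset.mul_sum, Finset.mul_sum, ← Finset.sum_add_distrib]
          exact Finset.sum_congr rfl fun j _ => by ring
  · rintro c hc v ⟨q, hq0, hqd, hqb, hqv⟩
    refine ⟨fun i j => c * q i j, ?_, ?_, ?_, ?_⟩
    · intro i j hij; exact mul_nonneg hc (hq0 i j hij)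
    · intro i; show c * q i i = 0; rw [hqd i]; ring
    · intro i
      show ∑ j ∈ Finset.univ.erase i, (c * q i j) * ps j
        = (∑ j ∈ Finset.univ.erase i, (c * q j i)) * ps i
      have e1 : ∑ j ∈ Finset.univ.erase i, (c * q i j) * ps j
          = c * (∑ j ∈ Finset.univ.erase i, q i j * ps j) := by
        rw [Finset.mul_sum]; exact Finset.sum_congr rfl fun j _ => by ring
      have e2 : ∑ j ∈ Finset.univ.erase i, (c * q j i)
          = c * (∑ j ∈ Finset.univ.erase i, q j i) := by
        rw [Finset.mul_sum]
      rw [e1, e2, hqb i]; ring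
    · funext i
      show (c • v) i = ∑ j ∈ Finset.univ.erase i,
        (c * q i j) * ps j * (p j / ps j - p i / ps i)
      calc (c • v) i = c * v i := rfl
        _ = c * ∑ j ∈ Finset.univ.erase i, q i j * ps j * (p j / ps j - p i / ps i) := by
          rw [congrFun hqv i]
        _ = ∑ j ∈ Finset.univ.erase i,
            (c * q i j) * ps j * (p j / ps j - p i / ps i) := by
          rw [Finset.mul_sum]; exact Finset.sum_congr rfl fun j _ => by ring
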